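/- Let q ≥ 2, n = (q^m−1)/(q−1), n' = (q^{m−1}−1)/(q−1), n'' = q^{m−1}. Let (B_0,...,B_{n''−1}) be a partition of the vertex set of H(n'−1,q) into codes with parameters (n'−1, q^{n'−1−(m−1)}, 3)_q, and let (D_0,...,D_{n''−1}) be a partition of the code M_0 = {x_1...x_{n''} : x_1+...+x_{n''} ≡ 0 (mod q)} into n'' codes with parameters (n'', q^{n''−m}, 3)_q. Then S = ⋃_{i=0}^{q^{m−1}−1} D_i B_i (concatenation D_iB_i = {dc : d∈D_i, c∈B_i}) is a code of length n−1, size q^{n−1−m}, and minimum Hamming distance 3. -/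

import Mathlib

lemma hd_append {p r q : ℕ} (a a' : Fin p → Fin q) (b b' : Fin r → Fin q) :
    hammingDist (Fin.append a b) (Fin.append a' b') = hammingDist a a' + hammingDist b b' := by
  classical
  simp only [hammingDist, Finset.card_filter]
  rw [Fin.sum_univ_add]
  simp [Fin.append_left, Fin.append_right]

lemma append_inj' {p r q : ℕ} {a a' : Fin p → Fin q} {b b' : Fin r → Fin q}
    (h : Fin.append a b = Fin.append a' b') : a = a' ∧ b = b' := by
  constructor
  · funext i
    have := congrFun h (Fin.castAdd r i)
    simpa [Fin.append_left] using this
  · funext i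
    have := congrFun h (Fin.natAdd p i)
    simpa [Fin.append_right] using this

lemma sum_zero_dist {N q : ℕ} {d d' : Fin N → Fin q}
    (hd : (∑ k, (d k : ℕ)) % q = 0) (hd' : (∑ k, (d' k : ℕ)) % q = 0)
    (hne : d ≠ d') : 2 ≤ hammingDist d d' := by
  classical
  by_contra h
  interval_cases hD : hammingDist d d'
  · exact hne (eq_of_hammingDist_eq_zero hD)
  · rw [hammingDist, Finset.card_eq_one] at hD
    obtain ⟨k0, hk0⟩ := hD
    have heq : ∀ k, k ≠ k0 → d k = d' k := by
      intro k hk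
      by_contra hne'
      have : k ∈ Finset.univ.filter (fun i => d i ≠ d' i) := by simp [hne']
      rw [hk0] at this
      exact hk (Finset.mem_singleton.1 this)
    have hsum : ∑ k ∈ Finset.univ.erase k0, (d k : ℕ)
        = ∑ k ∈ Finset.univ.erase k0, (d' k : ℕ) := by
      refine Finset.sum_congr rfl fun k hk => ?_
      rw [heq k (Finset.mem_erase.1 hk).1]
    have h1 : (d k0 : ℕ) + ∑ k ∈ Finset.univ.erase k0, (d k : ℕ) = ∑ k, (d k : ℕ) :=
      Finset.add_sum_erase _ (fun k => (d k : ℕ)) (Finset.mem_univ k0)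
    have h2 : (d' k0 : ℕ) + ∑ k ∈ Finset.univ.erase k0, (d' k : ℕ) = ∑ k, (d' k : ℕ) :=
      Finset.add_sum_erase _ (fun k => (d' k : ℕ)) (Finset.mem_univ k0)
    have hmod : ((d k0 : ℕ) + ∑ k ∈ Finset.univ.erase k0, (d k : ℕ)) % q
        = ((d' k0 : ℕ) + ∑ k ∈ Finset.univ.erase k0, (d k : ℕ)) % q := by
      rw [h1, hsum, h2, hd, hd']
    have : (d k0 : ℕ) % q = (d' k0 : ℕ) % q :=
      Nat.ModEq.add_right_cancel' _ hmod
    rw [Nat.mod_eq_of_lt (d k0).isLt, Nat.mod_eq_of_lt (d' k0).isLt] at this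
    have : d k0 = d' k0 := Fin.ext this
    have hmem : k0 ∈ Finset.univ.filter (fun i => d i ≠ d' i) := by
      rw [hk0]; exact Finset.mem_singleton_self k0
    simp [this] at hmem

theorem stmt_14 (q m n n' : ℕ) (hq : 2 ≤ q) (hm : 2 ≤ m)
    (hn : n * (q - 1) = q ^ m - 1) (hn' : n' * (q - 1) = q ^ (m - 1) - 1)
    (B : Fin (q ^ (m - 1)) → Finset (Fin (n' - 1) → Fin q))
    (D : Fin (q ^ (m - 1)) → Finset (Fin (q ^ (m - 1)) → Fin q))
    (hBdisj : ∀ i j, i ≠ j → Disjoint (B i) (B j))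
    (hBunion : Finset.univ.biUnion B = Finset.univ)
    (hBcard : ∀ i, (B i).card = q ^ (n' - 1 - (m - 1)))
    (hBdist : ∀ i, ∀ x ∈ B i, ∀ y ∈ B i, x ≠ y → 3 ≤ hammingDist x y)
    (hDdisj : ∀ i j, i ≠ j → Disjoint (D i) (D j))
    (hDunion : Finset.univ.biUnion D
      = Finset.univ.filter (fun x : Fin (q ^ (m - 1)) → Fin q =>
          (∑ k, (x k : ℕ)) % q = 0))
    (hDcard : ∀ i, (D i).card = q ^ (q ^ (m - 1) - m))
    (hDdist : ∀ i, ∀ x ∈ D i, ∀ y ∈ D i, x ≠ y → 3 ≤ hammingDist x y)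
    (S : Finset (Fin (q ^ (m - 1) + (n' - 1)) → Fin q))
    (hS : S = Finset.univ.biUnion (fun i => ((D i) ×ˢ (B i)).image
      (fun p => Fin.append p.1 p.2))) :
    S.card = q ^ (n - 1 - m) ∧
    ∀ x ∈ S, ∀ y ∈ S, x ≠ y → 3 ≤ hammingDist x y := by
  classical
  have hq1 : 1 ≤ q - 1 := by omega
  -- n = q^(m-1) + n'
  have hnn : n = q ^ (m - 1) + n' := by
    have hpow : q ^ m = q * q ^ (m - 1) := by
      conv_lhs => rw [show m = 1 + (m - 1) by omega]
      rw [pow_add, pow_one]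
    have h1 : 1 ≤ q ^ (m - 1) := Nat.one_le_pow _ _ (by omega)
    have h1' : 1 ≤ q ^ m := Nat.one_le_pow _ _ (by omega)
    have hpowZ : (q : ℤ) ^ m = q * q ^ (m - 1) := by exact_mod_cast hpow
    have key : (q ^ (m - 1) + n') * (q - 1) = q ^ m - 1 := by
      zify [show 1 ≤ q by omega, h1, h1'] at hn' ⊢
      linear_combination hn' - hpowZ
    exact (Nat.eq_of_mul_eq_mul_right (show 0 < q - 1 by omega) (key.trans hn.symm)).symm
  -- q^(m-1) ≥ m
  have hPm : m ≤ q ^ (m - 1) := by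
    have h1 : m - 1 < 2 ^ (m - 1) := Nat.lt_two_pow_self
    have h2 : 2 ^ (m - 1) ≤ q ^ (m - 1) := Nat.pow_le_pow_left hq _
    omega
  -- m - 1 ≤ n' - 1, from counting B
  have hBtotal : (m - 1) + (n' - 1 - (m - 1)) = n' - 1 := by
    have hcard := congrArg Finset.card hBunion
    rw [Finset.card_biUnion (fun i _ j _ hij => hBdisj i j hij)] at hcard
    simp only [hBcard, Finset.sum_const, Finset.card_univ, Fintype.card_fin,
      smul_eq_mul] at hcard
    rw [show Fintype.card (Fin (n' - 1) → Fin q) = q ^ (n' - 1) by simp,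
      ← pow_add] at hcard
    exact Nat.pow_right_injective hq hcard
  -- injectivity of append
  have hinj : ∀ (p : (Fin (q ^ (m-1)) → Fin q) × (Fin (n'-1) → Fin q))
      (p' : (Fin (q ^ (m-1)) → Fin q) × (Fin (n'-1) → Fin q)),
      Fin.append p.1 p.2 = Fin.append p'.1 p'.2 → p = p' := by
    rintro ⟨a, b⟩ ⟨a', b'⟩ h
    obtain ⟨h1, h2⟩ := append_inj' h
    exact Prod.ext h1 h2
  constructor
  · -- cardinality
    rw [hS, Finset.card_biUnion]
    · have : ∀ i, (((D i) ×ˢ (B i)).image (fun p => Fin.append p.1 p.2)).card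
          = q ^ (q ^ (m - 1) - m) * q ^ (n' - 1 - (m - 1)) := by
        intro i
        rw [Finset.card_image_of_injective _ (fun p p' => hinj p p'),
          Finset.card_product, hDcard, hBcard]
      simp only [this, Finset.sum_const, Finset.card_univ, Fintype.card_fin, smul_eq_mul]
      rw [← pow_add, ← pow_add]
      congr 1
      omega
    · intro i _ j _ hij
      simp only [Finset.disjoint_left]
      intro x hx hy
      obtain ⟨⟨a, b⟩, hab, hx⟩ := Finset.mem_image.1 hx
      obtain ⟨⟨a', b'⟩, hab', hy⟩ := Finset.mem_image.1 hy
      obtain ⟨h1, h2⟩ := append_inj' (hx.trans hy.symm)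
      rw [Finset.mem_product] at hab hab'
      subst h1
      exact Finset.disjoint_left.1 (hDdisj i j hij) hab.1 hab'.1
  · -- distance
    intro x hx y hy hxy
    rw [hS, Finset.mem_biUnion] at hx hy
    obtain ⟨i, _, hx⟩ := hx
    obtain ⟨j, _, hy⟩ := hy
    obtain ⟨⟨a, b⟩, hab, rfl⟩ := Finset.mem_image.1 hx
    obtain ⟨⟨a', b'⟩, hab', rfl⟩ := Finset.mem_image.1 hy
    rw [Finset.mem_product] at hab hab'
    dsimp only
    rw [hd_append]
    by_cases hij : i = j
    · subst hij
      by_cases haa : a = a'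
      · subst haa
        have hbb : b ≠ b' := fun h => hxy (by rw [h])
        have := hBdist i b hab.2 b' hab'.2 hbb
        rw [hammingDist_self]
        omega
      · have := hDdist i a hab.1 a' hab'.1 haa
        omega
    · -- different blocks
      have haa : a ≠ a' := fun h =>
        Finset.disjoint_left.1 (hDdisj i j hij) hab.1 (h ▸ hab'.1)
      have hbb : b ≠ b' := fun h =>
        Finset.disjoint_left.1 (hBdisj i j hij) hab.2 (h ▸ hab'.2)
      have hsumA : (∑ k, (a k : ℕ)) % q = 0 := by
        have : a ∈ Finset.univ.biUnion D := Finset.mem_biUnion.2 ⟨i, Finset.mem_univ _, hab.1⟩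
        rw [hDunion, Finset.mem_filter] at this
        exact this.2
      have hsumA' : (∑ k, (a' k : ℕ)) % q = 0 := by
        have : a' ∈ Finset.univ.biUnion D := Finset.mem_biUnion.2 ⟨j, Finset.mem_univ _, hab'.1⟩
        rw [hDunion, Finset.mem_filter] at this
        exact this.2
      have h2 := sum_zero_dist hsumA hsumA' haa
      have h1 : 1 ≤ hammingDist b b' := hammingDist_pos.2 hbb
      omega
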